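/- Let E be a real normed vector space, let a < b be real numbers, and let f : ℝ → E be a curve such that for every continuous linear functional λ : E → ℝ there exists a constant K_λ with λ ∘ f Lipschitz with constant K_λ on the interval [a,b]. Then there exists a constant K such that f is Lipschitz with constant K on [a,b]. (Scalarwise Lipschitz curves are Lipschitz, part of the characterization of Lipschitz curves via bounded functionals.) -/

import Mathlib

/-- A scalarwise Lipschitz curve into a normed space is Lipschitz on `[a,b]`. -/
theorem lipschitz_of_scalarwise_lipschitz {E : Type*} [NormedAddCommGroup E] [NormedSpace ℝ E]
    (a b : ℝ) (hab : a < b) (f : ℝ → E)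
    (h : ∀ l : E →L[ℝ] ℝ, ∃ K : ℝ, ∀ s ∈ Set.Icc a b, ∀ t ∈ Set.Icc a b,
      ‖l (f t) - l (f s)‖ ≤ K * |t - s|) :
    ∃ K : ℝ, ∀ s ∈ Set.Icc a b, ∀ t ∈ Set.Icc a b, ‖f t - f s‖ ≤ K * |t - s| := by
  set ι : Type _ := {p : ℝ × ℝ // p.1 ∈ Set.Icc a b ∧ p.2 ∈ Set.Icc a b ∧ p.1 ≠ p.2} with hι
  set J := NormedSpace.inclusionInDoubleDual ℝ E with hJ
  set g : ι → StrongDual ℝ (StrongDual ℝ E) :=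
    fun p => |p.1.2 - p.1.1|⁻¹ • J (f p.1.2 - f p.1.1) with hg
  have hbdd : ∀ l : StrongDual ℝ E, ∃ C, ∀ i : ι, ‖g i l‖ ≤ C := by
    intro l
    obtain ⟨K, hK⟩ := h l
    refine ⟨max K 0, fun i => ?_⟩
    obtain ⟨⟨s, t⟩, hs, ht, hst⟩ := i
    have hpos : (0:ℝ) < |t - s| := abs_pos.2 (sub_ne_zero.2 (Ne.symm hst))
    have : g ⟨(s, t), hs, ht, hst⟩ l = |t - s|⁻¹ • (l (f t) - l (f s)) := by
      simp [hg, hJ, NormedSpace.inclusionInDoubleDual, map_sub]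
    rw [this]
    have := hK s hs t ht
    calc ‖|t - s|⁻¹ • (l (f t) - l (f s))‖ = |t - s|⁻¹ * ‖l (f t) - l (f s)‖ := by
          rw [norm_smul]; simp [abs_of_nonneg (le_of_lt (inv_pos.2 hpos))]
      _ ≤ |t - s|⁻¹ * (K * |t - s|) := by
          exact mul_le_mul_of_nonneg_left this (le_of_lt (inv_pos.2 hpos))
      _ = K := by field_simp
      _ ≤ max K 0 := le_max_left _ _
  obtain ⟨C, hC⟩ := banach_steinhaus hbdd
  refine ⟨C, fun s hs t ht => ?_⟩
  rcases eq_or_ne s t with rfl | hst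
  · simp
  · have hpos : (0:ℝ) < |t - s| := abs_pos.2 (sub_ne_zero.2 (Ne.symm hst))
    have hnorm : ‖J (f t - f s)‖ = ‖f t - f s‖ :=
      (NormedSpace.inclusionInDoubleDualLi ℝ (E := E)).norm_map _
    have hgi : ‖g ⟨(s, t), hs, ht, hst⟩‖ = |t - s|⁻¹ * ‖f t - f s‖ := by
      rw [hg]
      simp only [norm_smul, norm_inv]
      have : (NormedSpace.inclusionInDoubleDual ℝ E) (f t - f s) = J (f t - f s) := rfl
      rw [this, (NormedSpace.toNormSMulClass (𝕜 := ℝ) (E := StrongDual ℝ (StrongDual ℝ E))).norm_smul (|t - s|⁻¹) (J (f t - f s)), hnorm]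
      simp [abs_abs]
    have := hC ⟨(s, t), hs, ht, hst⟩
    rw [hgi] at this
    have h2 : ‖f t - f s‖ = |t - s| * (|t - s|⁻¹ * ‖f t - f s‖) := by field_simp
    rw [h2, mul_comm C |t - s|]
    exact mul_le_mul_of_nonneg_left this (abs_nonneg _)
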